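/- For the belt buckle graph, the entropy-one condition det(A_{−l} − Id) = 0 for the 6×6 weighted adjacency matrix is equivalent to e^{−z} = (1 − e^{−x−y})/(2e^{−x−y} + e^{−x} + e^{−y}), for x, y, z > 0. -/

import Mathlib

set_option maxHeartbeats 2000000
set_option maxRecDepth 20000


open Real

theorem beltbuckle_entropy_one_condition (x y z : ℝ) (hx : 0 < x) (hy : 0 < y) (hz : 0 < z) :
    Matrix.det
      (!![0, 0, 0, 0, exp (-x), exp (-x);
          0, 0, 0, exp (-y), 0, exp (-y);
          0, 0, 0, exp (-z), exp (-z), 0;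
          0, exp (-x), exp (-x), 0, 0, 0;
          exp (-y), 0, exp (-y), 0, 0, 0;
          exp (-z), exp (-z), 0, 0, 0, 0] - (1 : Matrix (Fin 6) (Fin 6) ℝ)) = 0 ↔
      exp (-z) = (1 - exp (-x - y)) / (2 * exp (-x - y) + exp (-x) + exp (-y)) := by
  set a := exp (-x) with ha
  set b := exp (-y) with hb
  set c := exp (-z) with hc
  have hab : exp (-x - y) = a * b := by
    rw [ha, hb, ← Real.exp_add]; ring_nf
  have ha0 : 0 < a := exp_pos _
  have hb0 : 0 < b := exp_pos _
  have hc0 : 0 < c := exp_pos _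
  have ha1 : a < 1 := by rw [ha]; exact (by rw [show (1:ℝ) = exp 0 by simp]; exact Real.exp_lt_exp.2 (by linarith))
  have hb1 : b < 1 := by rw [hb]; exact (by rw [show (1:ℝ) = exp 0 by simp]; exact Real.exp_lt_exp.2 (by linarith))
  have hc1 : c < 1 := by rw [hc]; exact (by rw [show (1:ℝ) = exp 0 by simp]; exact Real.exp_lt_exp.2 (by linarith))
  have hM : (!![0, 0, 0, 0, a, a;
          0, 0, 0, b, 0, b;
          0, 0, 0, c, c, 0;
          0, a, a, 0, 0, 0;
          b, 0, b, 0, 0, 0;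
          c, c, 0, 0, 0, 0] - (1 : Matrix (Fin 6) (Fin 6) ℝ)) =
      !![-1, 0, 0, 0, a, a;
          0, -1, 0, b, 0, b;
          0, 0, -1, c, c, 0;
          0, a, a, -1, 0, 0;
          b, 0, b, 0, -1, 0;
          c, c, 0, 0, 0, -1] := by
    ext i j
    fin_cases i <;> fin_cases j <;>
      norm_num [Matrix.one_apply, Matrix.sub_apply, Fin.succ,
        Matrix.cons_val_succ', Matrix.cons_val_zero, Matrix.cons_val_one, Fin.ext_iff]
  have key : Matrix.det
      (!![(-1:ℝ), 0, 0, 0, a, a;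
          0, -1, 0, b, 0, b;
          0, 0, -1, c, c, 0;
          0, a, a, -1, 0, 0;
          b, 0, b, 0, -1, 0;
          c, c, 0, 0, 0, -1]) =
      (2*a*b*c + a*b + a*c + b*c - 1) * (a*b + a*c + b*c - 2*a*b*c - 1) := by
    simp (config := {decide := true}) [Matrix.det_succ_row_zero, Fin.sum_univ_succ, Fin.succAbove]
    ring
  rw [hM, key, hab]
  have hg : a*b + a*c + b*c - 2*a*b*c - 1 < 0 := by nlinarith [mul_pos (mul_pos (sub_pos.2 ha1) (sub_pos.2 hb1)) hc0, mul_pos (sub_pos.2 (show a*b < 1 by nlinarith)) (sub_pos.2 hc1)]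
  have hd : 0 < 2 * (a*b) + a + b := by positivity
  rw [mul_eq_zero]
  constructor
  · rintro (h | h)
    · rw [eq_div_iff (ne_of_gt hd)]; linarith
    · linarith
  · intro h
    left
    rw [eq_div_iff (ne_of_gt hd)] at h
    linarith
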